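/- Let G be a proper subdomain of ℝⁿ and β an arc in G with endpoints w₁ and w₂, with w₀ ∈ β a point where d_G attains its infimum over β. If k_G(w₁, w₂) ≥ 3, then diam(β) > (2/3)·d_G(w₀). -/

import Mathlib

open Metric Set

/-- The quasihyperbolic length of a path `γ` (parametrized on `[0,1]`) in `G`. -/
noncomputable def qhLen {n : ℕ} (G : Set (EuclideanSpace ℝ (Fin n)))
    (γ : ℝ → EuclideanSpace ℝ (Fin n)) : ℝ :=
  ∫ t in (0:ℝ)..1, ‖deriv γ t‖ / infDist (γ t) Gᶜ

/-- The quasihyperbolic distance between `x` and `y` in `G`: the infimum of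
quasihyperbolic lengths of differentiable paths in `G` joining `x` and `y`. -/
noncomputable def qhDist {n : ℕ} (G : Set (EuclideanSpace ℝ (Fin n)))
    (x y : EuclideanSpace ℝ (Fin n)) : ℝ :=
  sInf { L | ∃ γ : ℝ → EuclideanSpace ℝ (Fin n),
      γ 0 = x ∧ γ 1 = y ∧ (∀ t ∈ Set.Icc (0:ℝ) 1, γ t ∈ G) ∧
      (∀ t ∈ Set.Icc (0:ℝ) 1, DifferentiableAt ℝ γ t) ∧ L = qhLen G γ }

/-- If `β` is an arc in `G` with endpoints `w₁ = β 0`, `w₂ = β 1`, `w₀ = β t₀`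
minimizes `d_G` over `β`, and `k_G(w₁,w₂) ≥ 3`, then `diam(β) > (2/3)·d_G(w₀)`. -/
theorem stmt18 {n : ℕ} (G : Set (EuclideanSpace ℝ (Fin n)))
    (hG : IsOpen G) (hGconn : IsConnected G) (hproper : Gᶜ.Nonempty)
    (β : ℝ → EuclideanSpace ℝ (Fin n))
    (hcont : ContinuousOn β (Icc 0 1))
    (hin : ∀ t ∈ Icc (0:ℝ) 1, β t ∈ G)
    (t₀ : ℝ) (ht₀ : t₀ ∈ Icc (0:ℝ) 1)
    (hmin : ∀ t ∈ Icc (0:ℝ) 1, infDist (β t₀) Gᶜ ≤ infDist (β t) Gᶜ)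
    (hk : 3 ≤ qhDist G (β 0) (β 1)) :
    (2 / 3) * infDist (β t₀) Gᶜ < Metric.diam (β '' Icc 0 1) := by
  by_contra h
  push_neg at h
  set d₀ := infDist (β t₀) Gᶜ with hd₀
  have hGc : IsClosed (Gᶜ) := hG.isClosed_compl
  have hd₀pos : 0 < d₀ := by
    rw [← hGc.notMem_iff_infDist_pos hproper]
    simpa using hin t₀ ht₀
  -- the straight segment
  set v := β 1 - β 0 with hv
  have h01 : (0:ℝ) ∈ Icc (0:ℝ) 1 := by norm_num
  have h11 : (1:ℝ) ∈ Icc (0:ℝ) 1 := by norm_num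
  have hvd : ‖v‖ ≤ (2/3) * d₀ := by
    have h1 : dist (β 1) (β 0) ≤ Metric.diam (β '' Icc 0 1) :=
      dist_le_diam_of_mem (IsCompact.isBounded ((isCompact_Icc).image_of_continuousOn hcont))
        (mem_image_of_mem β h11) (mem_image_of_mem β h01)
    calc ‖v‖ = dist (β 1) (β 0) := (dist_eq_norm _ _).symm
      _ ≤ Metric.diam (β '' Icc 0 1) := h1
      _ ≤ (2/3) * d₀ := h
  set γ : ℝ → EuclideanSpace ℝ (Fin n) := fun t => β 0 + t • v with hγ
  have hder : ∀ t : ℝ, HasDerivAt γ v t := by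
    intro t
    have := ((hasDerivAt_id t).smul_const v).const_add (β 0)
    simp only [id_eq, one_smul] at this
    exact this
  have hclose : ∀ t ∈ Icc (0:ℝ) 1, dist (γ t) (β 0) ≤ (2/3) * d₀ := by
    intro t ht
    have : dist (γ t) (β 0) = |t| * ‖v‖ := by
      simp [hγ, dist_eq_norm, norm_smul]
    rw [this]
    have h1 : |t| ≤ 1 := abs_le.mpr ⟨by linarith [ht.1], ht.2⟩
    calc |t| * ‖v‖ ≤ 1 * ‖v‖ := by
          exact mul_le_mul_of_nonneg_right h1 (norm_nonneg _)
      _ = ‖v‖ := one_mul _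
      _ ≤ (2/3) * d₀ := hvd
  have hlow : ∀ t ∈ Icc (0:ℝ) 1, d₀ / 3 ≤ infDist (γ t) Gᶜ := by
    intro t ht
    have h1 : infDist (β 0) Gᶜ ≤ infDist (γ t) Gᶜ + dist (β 0) (γ t) :=
      infDist_le_infDist_add_dist
    have h2 : d₀ ≤ infDist (β 0) Gᶜ := hmin 0 h01
    have h3 := hclose t ht
    rw [dist_comm] at h3
    linarith
  have hγin : ∀ t ∈ Icc (0:ℝ) 1, γ t ∈ G := by
    intro t ht
    by_contra hmem
    have : 0 < infDist (γ t) Gᶜ := lt_of_lt_of_le (by linarith) (hlow t ht)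
    exact ((hGc.notMem_iff_infDist_pos hproper).mpr this) hmem
  -- the integrand is bounded by 2
  have hγc : Continuous γ := by fun_prop
  have hcontd : ContinuousOn (fun t => ‖deriv γ t‖ / infDist (γ t) Gᶜ) (Icc 0 1) := by
    have heq : ∀ t ∈ Icc (0:ℝ) 1, ‖v‖ / infDist (γ t) Gᶜ = ‖deriv γ t‖ / infDist (γ t) Gᶜ := by
      intro t _
      rw [(hder t).deriv]
    refine ContinuousOn.congr ?_ fun t ht => ((heq t ht).symm)
    apply ContinuousOn.div continuousOn_const
      ((continuous_infDist_pt _).comp hγc).continuousOn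
    intro t ht
    have := hlow t ht
    exact ne_of_gt (lt_of_lt_of_le (by linarith) this)
  have hqlen : qhLen G γ ≤ 2 := by
    unfold qhLen
    have hInt : IntervalIntegrable (fun t => ‖deriv γ t‖ / infDist (γ t) Gᶜ)
        MeasureTheory.volume 0 1 := by
      apply ContinuousOn.intervalIntegrable
      rwa [uIcc_of_le (by norm_num : (0:ℝ) ≤ 1)]
    have hbound : ∀ t ∈ Icc (0:ℝ) 1, ‖deriv γ t‖ / infDist (γ t) Gᶜ ≤ 2 := by
      intro t ht
      rw [(hder t).deriv]
      have h1 := hlow t ht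
      have h2 : 0 < infDist (γ t) Gᶜ := lt_of_lt_of_le (by linarith) h1
      rw [div_le_iff₀ h2]
      calc ‖v‖ ≤ (2/3) * d₀ := hvd
        _ = 2 * (d₀ / 3) := by ring
        _ ≤ 2 * infDist (γ t) Gᶜ := by linarith
    calc (∫ t in (0:ℝ)..1, ‖deriv γ t‖ / infDist (γ t) Gᶜ)
        ≤ ∫ _t in (0:ℝ)..1, (2:ℝ) := by
          apply intervalIntegral.integral_mono_on (by norm_num) hInt
            (intervalIntegrable_const) hbound
      _ = 2 := by simp
  -- qhDist ≤ qhLen γ ≤ 2 < 3, contradiction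
  have hbdd : BddBelow { L | ∃ γ : ℝ → EuclideanSpace ℝ (Fin n),
      γ 0 = β 0 ∧ γ 1 = β 1 ∧ (∀ t ∈ Set.Icc (0:ℝ) 1, γ t ∈ G) ∧
      (∀ t ∈ Set.Icc (0:ℝ) 1, DifferentiableAt ℝ γ t) ∧ L = qhLen G γ } := by
    refine ⟨0, ?_⟩
    rintro L ⟨g, -, -, -, -, rfl⟩
    unfold qhLen
    apply intervalIntegral.integral_nonneg (by norm_num)
    intro t _
    exact div_nonneg (norm_nonneg _) infDist_nonneg
  have hmem : qhLen G γ ∈ { L | ∃ γ' : ℝ → EuclideanSpace ℝ (Fin n),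
      γ' 0 = β 0 ∧ γ' 1 = β 1 ∧ (∀ t ∈ Set.Icc (0:ℝ) 1, γ' t ∈ G) ∧
      (∀ t ∈ Set.Icc (0:ℝ) 1, DifferentiableAt ℝ γ' t) ∧ L = qhLen G γ' } := by
    exact ⟨γ, by simp [hγ], by simp [hγ, hv], hγin, fun t _ => (hder t).differentiableAt, rfl⟩
  have : qhDist G (β 0) (β 1) ≤ qhLen G γ := csInf_le hbdd hmem
  linarith
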